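/- Under the hypotheses of the Lagrangian conservation law — namely d > 0, T ∈ (0,∞], v, n : [0,T) × ℝ → ℝ with n having continuous ∂_t n and ∂_x n, ∂_x v continuous, ∂_t n + d·v·∂_x n + 2d·(∂_x v)·n = 0 everywhere, q(0,x) = x, ∂_t q(t,x) = d·v(t,q(t,x)), and ∂_t(∂_x q)(t,x) = d·(∂_x v)(t,q(t,x))·∂_x q(t,x) — assume additionally that for each t ∈ [0,T) the map q(t,·) : ℝ → ℝ is surjective, that ∂_x q(t,x) ≠ 0 for all (t,x), and that n(0,x) ≥ 0 for all x ∈ ℝ. Then n(t,y) ≥ 0 for all t ∈ [0,T) and y ∈ ℝ. -/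

import Mathlib

open scoped ENNReal

/-- **Sign persistence of the momentum along the Lagrangian flow.** Under the
hypotheses of the Lagrangian conservation law, if moreover each `q(t,·)` is surjective,
`∂ₓq` never vanishes and `n(0,·) ≥ 0`, then `n(t,y) ≥ 0` for all `t ∈ [0,T)`, `y ∈ ℝ`.
Here `T ∈ (0,∞]` is encoded as `T : ℝ≥0∞` with `0 < T`, and membership of a time `t`
in `[0,T)` as `0 ≤ t ∧ ENNReal.ofReal t < T`. -/
theorem momentum_sign_persistence (d : ℝ) (hd : 0 < d) (T : ℝ≥0∞) (hT : 0 < T)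
    (v n q : ℝ → ℝ → ℝ)
    -- `n` has partial derivatives ∂ₜn and ∂ₓn, continuous on `[0,T) × ℝ`
    (hnt : ∀ t x : ℝ, 0 ≤ t → ENNReal.ofReal t < T →
      DifferentiableAt ℝ (fun s => n s x) t)
    (hnx : ∀ t x : ℝ, 0 ≤ t → ENNReal.ofReal t < T → DifferentiableAt ℝ (n t) x)
    (hntc : ContinuousOn (fun p : ℝ × ℝ => deriv (fun s => n s p.2) p.1)
      {p : ℝ × ℝ | 0 ≤ p.1 ∧ ENNReal.ofReal p.1 < T})
    (hnxc : ContinuousOn (fun p : ℝ × ℝ => deriv (n p.1) p.2)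
      {p : ℝ × ℝ | 0 ≤ p.1 ∧ ENNReal.ofReal p.1 < T})
    -- `v` is continuous with continuous ∂ₓv
    (hvc : ContinuousOn (fun p : ℝ × ℝ => v p.1 p.2)
      {p : ℝ × ℝ | 0 ≤ p.1 ∧ ENNReal.ofReal p.1 < T})
    (hvx : ∀ t x : ℝ, 0 ≤ t → ENNReal.ofReal t < T → DifferentiableAt ℝ (v t) x)
    (hvxc : ContinuousOn (fun p : ℝ × ℝ => deriv (v p.1) p.2)
      {p : ℝ × ℝ | 0 ≤ p.1 ∧ ENNReal.ofReal p.1 < T})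
    -- the transport equation holds at every point of `[0,T) × ℝ`
    (heq : ∀ t x : ℝ, 0 ≤ t → ENNReal.ofReal t < T →
      deriv (fun s => n s x) t + d * v t x * deriv (n t) x
        + 2 * d * deriv (v t) x * n t x = 0)
    -- the Lagrangian flow
    (hq0 : ∀ x : ℝ, q 0 x = x)
    (hqt : ∀ t x : ℝ, 0 ≤ t → ENNReal.ofReal t < T →
      HasDerivAt (fun s => q s x) (d * v t (q t x)) t)
    -- ∂ₓq exists and satisfies ∂ₜ(∂ₓq) = d (∂ₓv)(t, q) ∂ₓq
    (hqx : ∀ t x : ℝ, 0 ≤ t → ENNReal.ofReal t < T → DifferentiableAt ℝ (q t) x)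
    (hqxt : ∀ t x : ℝ, 0 ≤ t → ENNReal.ofReal t < T →
      HasDerivAt (fun s => deriv (q s) x)
        (d * deriv (v t) (q t x) * deriv (q t) x) t)
    -- additional hypotheses
    (hsurj : ∀ t : ℝ, 0 ≤ t → ENNReal.ofReal t < T → Function.Surjective (q t))
    (hne : ∀ t x : ℝ, 0 ≤ t → ENNReal.ofReal t < T → deriv (q t) x ≠ 0)
    (hn0 : ∀ x : ℝ, 0 ≤ n 0 x) :
    ∀ t : ℝ, 0 ≤ t → ENNReal.ofReal t < T → ∀ y : ℝ, 0 ≤ n t y := by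

  intro t ht htT y
  obtain ⟨x, hx⟩ := hsurj t ht htT y
  -- choose t₁ with t < t₁ and ofReal t₁ < T
  obtain ⟨r, hr1, hr2⟩ := exists_between htT
  have hrtop : r ≠ ⊤ := (hr2.trans_le le_top).ne
  set t₁ := r.toReal with ht₁def
  have hofr : ENNReal.ofReal t₁ = r := ENNReal.ofReal_toReal hrtop
  have htt₁ : t < t₁ := by
    rw [← hofr] at hr1
    exact (ENNReal.ofReal_lt_ofReal_iff_of_nonneg ht).mp hr1
  have hdom : ∀ s : ℝ, s ∈ Set.Icc (0:ℝ) t₁ → 0 ≤ s ∧ ENNReal.ofReal s < T := by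
    intro s hs
    exact ⟨hs.1, lt_of_le_of_lt (ENNReal.ofReal_le_ofReal hs.2) (hofr ▸ hr2)⟩
  -- the key derivative computation
  have key : ∀ s₀ ∈ Set.Icc (0:ℝ) t₁,
      HasDerivWithinAt (fun s => n s (q s x) * (deriv (q s) x) ^ 2) 0
        (Set.Icc 0 t₁) s₀ := by
    intro s₀ hs₀
    obtain ⟨hs₀0, hs₀T⟩ := hdom s₀ hs₀
    have hγ : HasDerivAt (fun s => q s x) (d * v s₀ (q s₀ x)) s₀ := hqt s₀ x hs₀0 hs₀T
    have hg : HasDerivAt (fun s => deriv (q s) x)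
        (d * deriv (v s₀) (q s₀ x) * deriv (q s₀) x) s₀ := hqxt s₀ x hs₀0 hs₀T
    have hH : HasDerivAt (fun s => n s₀ (q s x))
        (deriv (n s₀) (q s₀ x) * (d * v s₀ (q s₀ x))) s₀ := by
      have := ((hnx s₀ (q s₀ x) hs₀0 hs₀T).hasDerivAt).comp s₀ hγ
      exact this
    have hA : HasDerivWithinAt (fun s => n s (q s x) - n s₀ (q s x))
        (deriv (fun σ => n σ (q s₀ x)) s₀) (Set.Icc 0 t₁) s₀ := by
      rw [hasDerivWithinAt_iff_tendsto_slope]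
      rw [Metric.tendsto_nhdsWithin_nhds]
      intro ε hε
      have hmem : ((s₀, q s₀ x) : ℝ × ℝ) ∈
          {p : ℝ × ℝ | 0 ≤ p.1 ∧ ENNReal.ofReal p.1 < T} := ⟨hs₀0, hs₀T⟩
      have hc := hntc (s₀, q s₀ x) hmem
      rw [Metric.continuousWithinAt_iff] at hc
      obtain ⟨δ₁, hδ₁, hc⟩ := hc ε hε
      have hγc : ContinuousAt (fun s => q s x) s₀ := hγ.continuousAt
      rw [Metric.continuousAt_iff] at hγc
      obtain ⟨δ₂, hδ₂, hγc⟩ := hγc δ₁ hδ₁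
      refine ⟨min δ₁ δ₂, lt_min hδ₁ hδ₂, ?_⟩
      intro s hs hds
      obtain ⟨hsI, hsne⟩ := hs
      have hsne' : s ≠ s₀ := hsne
      -- mean value theorem on the interval between s₀ and s
      have hmvt : ∃ ξ, |ξ - s₀| < |s - s₀| ∧ ξ ∈ Set.Icc (0:ℝ) t₁ ∧
          deriv (fun σ => n σ (q s x)) ξ
            = (n s (q s x) - n s₀ (q s x)) / (s - s₀) := by
        have hIcc : ∀ a b : ℝ, a ∈ Set.Icc (0:ℝ) t₁ → b ∈ Set.Icc (0:ℝ) t₁ → a < b →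
            ∃ ξ ∈ Set.Ioo a b, deriv (fun σ => n σ (q s x)) ξ
              = (n b (q s x) - n a (q s x)) / (b - a) := by
          intro a b haI hbI hab
          have hsub : Set.Icc a b ⊆ Set.Icc (0:ℝ) t₁ :=
            Set.Icc_subset_Icc haI.1 hbI.2
          have hcont : ContinuousOn (fun σ => n σ (q s x)) (Set.Icc a b) := by
            intro σ hσ
            obtain ⟨h1, h2⟩ := hdom σ (hsub hσ)
            exact (hnt σ (q s x) h1 h2).continuousAt.continuousWithinAt
          have hder : ∀ σ ∈ Set.Ioo a b, HasDerivAt (fun σ' => n σ' (q s x))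
              (deriv (fun σ' => n σ' (q s x)) σ) σ := by
            intro σ hσ
            obtain ⟨h1, h2⟩ := hdom σ (hsub (Set.mem_Icc_of_Ioo hσ))
            exact (hnt σ (q s x) h1 h2).hasDerivAt
          obtain ⟨c, hc1, hc2⟩ := exists_hasDerivAt_eq_slope (fun σ => n σ (q s x))
            (fun σ => deriv (fun σ' => n σ' (q s x)) σ) hab hcont hder
          exact ⟨c, hc1, hc2⟩
        rcases lt_or_gt_of_ne hsne' with hlt | hgt
        · obtain ⟨ξ, hξ, hval⟩ := hIcc s s₀ hsI hs₀ hlt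
          refine ⟨ξ, ?_, Set.Icc_subset_Icc hsI.1 hs₀.2 (Set.mem_Icc_of_Ioo hξ), ?_⟩
          · rw [abs_of_neg (by linarith [hξ.2] : ξ - s₀ < 0),
              abs_of_neg (by linarith : s - s₀ < 0)]
            linarith [hξ.1]
          · rw [hval]
            rw [← neg_sub (n s (q s x)), ← neg_sub s s₀, neg_div_neg_eq]
        · obtain ⟨ξ, hξ, hval⟩ := hIcc s₀ s hs₀ hsI hgt
          refine ⟨ξ, ?_, Set.Icc_subset_Icc hs₀.1 hsI.2 (Set.mem_Icc_of_Ioo hξ), ?_⟩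
          · rw [abs_of_pos (by linarith [hξ.1] : (0:ℝ) < ξ - s₀),
              abs_of_pos (by linarith : (0:ℝ) < s - s₀)]
            linarith [hξ.2]
          · exact hval
      obtain ⟨ξ, hξd, hξI, hξval⟩ := hmvt
      have hslope : slope (fun s => n s (q s x) - n s₀ (q s x)) s₀ s
          = (n s (q s x) - n s₀ (q s x)) / (s - s₀) := by
        rw [slope_def_field]
        simp
      rw [hslope, ← hξval]
      have hdist1 : dist ξ s₀ < δ₁ := by
        have h1 : dist ξ s₀ < dist s s₀ := by
          rw [Real.dist_eq, Real.dist_eq]; exact hξd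
        exact h1.trans (lt_of_lt_of_le hds (min_le_left _ _))
      have hdist2 : dist (q s x) (q s₀ x) < δ₁ :=
        hγc (lt_of_lt_of_le hds (min_le_right _ _))
      have hmemξ : ((ξ, q s x) : ℝ × ℝ) ∈
          {p : ℝ × ℝ | 0 ≤ p.1 ∧ ENNReal.ofReal p.1 < T} := by
        obtain ⟨h1, h2⟩ := hdom ξ hξI
        exact ⟨h1, h2⟩
      have := hc hmemξ (by
        rw [Prod.dist_eq]
        exact max_lt hdist1 hdist2)
      exact this
    -- assemble: F = A + H
    have hF : HasDerivWithinAt (fun s => n s (q s x))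
        (deriv (fun σ => n σ (q s₀ x)) s₀ + deriv (n s₀) (q s₀ x) * (d * v s₀ (q s₀ x)))
        (Set.Icc 0 t₁) s₀ := by
      have := hA.add hH.hasDerivWithinAt
      exact this.congr_of_eventuallyEq (Filter.Eventually.of_forall fun s => by simp) (by simp)
    have hw := hF.mul ((hg.hasDerivWithinAt).pow 2)
    have he := heq s₀ (q s₀ x) hs₀0 hs₀T
    refine HasDerivWithinAt.congr_of_eventuallyEq (hw.congr_deriv ?_) (Filter.Eventually.of_forall fun s => rfl) rfl
    norm_num
    linear_combination (deriv (q s₀) x ^ 2) * he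
  -- constancy of w on [0, t]
  have hsub : Set.Icc (0:ℝ) t ⊆ Set.Icc (0:ℝ) t₁ :=
    Set.Icc_subset_Icc le_rfl htt₁.le
  have hconst := constant_of_has_deriv_right_zero
    (f := fun s => n s (q s x) * (deriv (q s) x) ^ 2) (a := 0) (b := t)
    (fun s hs => ((key s (hsub hs)).continuousWithinAt).mono hsub)
    (fun s hs => by
      have h1 := (key s (hsub (Set.mem_Icc_of_Ico hs))).mono
        (Set.Icc_subset_Icc hs.1 le_rfl)
      exact h1.mono_of_mem_nhdsWithin (Icc_mem_nhdsGE_of_mem ⟨le_rfl, hs.2.trans htt₁⟩))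
  have hwt : n t (q t x) * deriv (q t) x ^ 2 = n 0 (q 0 x) * deriv (q 0) x ^ 2 :=
    hconst t ⟨ht, le_rfl⟩
  have hq0' : q 0 = fun z => z := funext hq0
  have hder0 : deriv (q 0) x = 1 := by rw [hq0']; exact deriv_id x
  rw [hq0 x, hder0] at hwt
  have hG : (0:ℝ) < (deriv (q t) x) ^ 2 := pow_two_pos_of_ne_zero (hne t x ht htT)
  have hxx : n t (q t x) * (deriv (q t) x) ^ 2 = n 0 x * 1 ^ 2 := hwt
  rw [← hx]
  nlinarith [hn0 x, hG, hxx]
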